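/- Let G be a C4-free simple graph and v a vertex of G. Then every edge f \in D_v(2) belongs to Sect_e(2) for at most two edges e \in D_v(0); that is, the number of edges e incident to v with dist_G(e, f) = 1 is at most two. -/
import Mathlib


open SimpleGraph

/-- A graph is `C₄`-free if it contains no cycle of length four as a subgraph,
i.e. there are no four distinct vertices `a, b, c, d` with
`a ~ b`, `b ~ c`, `c ~ d` and `d ~ a`. -/
def C4Free {V : Type*} (G : SimpleGraph V) : Prop :=
  ¬ ∃ a b c d : V, a ≠ b ∧ a ≠ c ∧ a ≠ d ∧ b ≠ c ∧ b ≠ d ∧ c ≠ d ∧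
      G.Adj a b ∧ G.Adj b c ∧ G.Adj c d ∧ G.Adj d a

/-- The distance between two edges (or generally two pairs of vertices):
the minimum over endpoints `x ∈ e`, `y ∈ f` of the graph distance. -/
noncomputable def edgeDist {V : Type*} (G : SimpleGraph V) (e f : Sym2 V) : ℕ∞ :=
  ⨅ x ∈ e, ⨅ y ∈ f, G.edist x y

/-- `Dkl G v k l` is the set of edges `{x, y}` of `G` with
`dist(x, v) = k` and `dist(y, v) = l`. -/
def Dkl {V : Type*} (G : SimpleGraph V) (v : V) (k l : ℕ) : Set (Sym2 V) :=
  {e | e ∈ G.edgeSet ∧ ∃ x y : V, e = s(x, y) ∧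
    G.edist x v = (k : ℕ∞) ∧ G.edist y v = (l : ℕ∞)}

/-- `D G v k = D_v(k) = D_v(k, k) ∪ D_v(k, k+1)`. -/
def D {V : Type*} (G : SimpleGraph V) (v : V) (k : ℕ) : Set (Sym2 V) :=
  Dkl G v k k ∪ Dkl G v k (k + 1)

/-- `Sect G v e = Sect_e(2)`: the edges of `D_v(2)` at distance exactly one
from the edge `e`. -/
noncomputable def Sect {V : Type*} (G : SimpleGraph V) (v : V) (e : Sym2 V) : Set (Sym2 V) :=
  {f | f ∈ D G v 2 ∧ edgeDist G e f = 1}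

/-- An induced matching: a set `M` of edges of `G` such that the subgraph of `G`
induced by the set of all endpoints of edges in `M` has edge set exactly `M`. -/
def IsInducedMatching {V : Type*} (G : SimpleGraph V) (M : Set (Sym2 V)) : Prop :=
  M ⊆ G.edgeSet ∧ {e ∈ G.edgeSet | ∀ x ∈ e, ∃ f ∈ M, x ∈ f} = M

lemma edgeDist_pair {V : Type*} (G : SimpleGraph V) (a b c d : V) :
    edgeDist G s(a,b) s(c,d) =
      G.edist a c ⊓ G.edist b c ⊓ (G.edist a d ⊓ G.edist b d) := by
  simp [edgeDist, Sym2.mem_iff, iInf_or, iInf_inf_eq]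

lemma key {V : Type*} (G : SimpleGraph V) (v x y : V) (hx : G.edist x v = 2)
    (hy : G.edist y v = 2 ∨ G.edist y v = 3) (e : Sym2 V)
    (he : e ∈ D G v 0) (hd : edgeDist G e s(x,y) = 1) :
    ∃ u : V, e = s(v, u) ∧ G.Adj v u ∧ (G.Adj u x ∨ G.Adj u y) := by
  rcases he with he | he <;> obtain ⟨hes, p, q, rfl, hp, hq⟩ := he <;>
      simp only [Nat.cast_zero, Nat.cast_one, Nat.cast_ofNat, zero_add] at hp hq <;>
      rw [edist_eq_zero_iff] at hp <;> simp only [hp] at hd hes ⊢ <;> clear hp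
  · rw [edist_eq_zero_iff] at hq; subst hq
    rw [SimpleGraph.mem_edgeSet] at hes
    exact absurd hes (G.irrefl)
  · refine ⟨q, rfl, edist_eq_one_iff_adj.mp (by rwa [G.edist_comm]), ?_⟩
    rw [edgeDist_pair] at hd
    have h4 : G.edist v x = 1 ∨ G.edist q x = 1 ∨ G.edist v y = 1 ∨ G.edist q y = 1 := by
      rcases min_eq_iff.mp hd with ⟨h, -⟩ | ⟨h, -⟩ <;>
        rcases min_eq_iff.mp h with ⟨h', -⟩ | ⟨h', -⟩ <;> tauto
    have hvx : G.edist v x ≠ 1 := fun h => by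
      rw [G.edist_comm] at h; rw [h] at hx; norm_num at hx
    have hvy : G.edist v y ≠ 1 := fun h => by
      rw [G.edist_comm] at h; rw [h] at hy; rcases hy with h | h <;> norm_num at h
    rcases h4 with h | h | h | h
    · exact absurd h hvx
    · exact Or.inl (edist_eq_one_iff_adj.mp h)
    · exact absurd h hvy
    · exact Or.inr (edist_eq_one_iff_adj.mp h)

lemma c4aux {V : Type*} {G : SimpleGraph V} (hG : C4Free G) {v w u₁ u₂ : V}
    (h1 : G.Adj v u₁) (h2 : G.Adj v u₂) (h3 : G.Adj u₁ w) (h4 : G.Adj u₂ w)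
    (hu : u₁ ≠ u₂) (hw : G.edist w v = 2 ∨ G.edist w v = 3) : False := by
  have hw1 : G.edist w v ≠ 1 := by rcases hw with h | h <;> rw [h] <;> norm_num
  have hvw : v ≠ w := by
    rintro rfl
    rcases hw with h | h <;> rw [edist_self] at h <;> norm_num at h
  have hu1w : u₁ ≠ w := by
    rintro rfl
    exact hw1 (edist_eq_one_iff_adj.mpr h1.symm)
  have hu2w : u₂ ≠ w := by
    rintro rfl
    exact hw1 (edist_eq_one_iff_adj.mpr h2.symm)
  exact hG ⟨v, u₁, w, u₂, h1.ne, hvw, h2.ne, hu1w, hu, fun h => hu2w h.symm,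
    h1, h3, h4.symm, h2.symm⟩

/-- In a C4-free graph, every edge `f` in `D_v(2)` belongs to `Sect_e(2)` for
at most two edges `e` in `D_v(0)`. -/
theorem stmt_4 {V : Type*} (G : SimpleGraph V) (hG : C4Free G) (v : V)
    (f : Sym2 V) (hf : f ∈ D G v 2) :
    ∀ e₁ e₂ e₃ : Sym2 V,
      e₁ ∈ D G v 0 → edgeDist G e₁ f = 1 →
      e₂ ∈ D G v 0 → edgeDist G e₂ f = 1 →
      e₃ ∈ D G v 0 → edgeDist G e₃ f = 1 →
      e₁ = e₂ ∨ e₁ = e₃ ∨ e₂ = e₃ := by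
  intro e₁ e₂ e₃ h₁ hd₁ h₂ hd₂ h₃ hd₃
  by_contra hcon
  push_neg at hcon
  obtain ⟨h12, h13, h23⟩ := hcon
  obtain ⟨x, y, rfl, hx, hy⟩ : ∃ x y : V, f = s(x,y) ∧ G.edist x v = 2 ∧
      (G.edist y v = 2 ∨ G.edist y v = 3) := by
    rcases hf with ⟨-, x, y, rfl, hx, hy⟩ | ⟨-, x, y, rfl, hx, hy⟩ <;>
      norm_num at hx hy <;> exact ⟨x, y, rfl, hx, by tauto⟩
  obtain ⟨u₁, rfl, ha₁, hb₁⟩ := key G v x y hx hy e₁ h₁ hd₁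
  obtain ⟨u₂, rfl, ha₂, hb₂⟩ := key G v x y hx hy e₂ h₂ hd₂
  obtain ⟨u₃, rfl, ha₃, hb₃⟩ := key G v x y hx hy e₃ h₃ hd₃
  have hu12 : u₁ ≠ u₂ := fun h => h12 (by rw [h])
  have hu13 : u₁ ≠ u₃ := fun h => h13 (by rw [h])
  have hu23 : u₂ ≠ u₃ := fun h => h23 (by rw [h])
  have hwx : G.edist x v = 2 ∨ G.edist x v = 3 := Or.inl hx
  rcases hb₁ with hb₁ | hb₁ <;> rcases hb₂ with hb₂ | hb₂ <;> rcases hb₃ with hb₃ | hb₃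
  · exact c4aux hG ha₁ ha₂ hb₁ hb₂ hu12 hwx
  · exact c4aux hG ha₁ ha₂ hb₁ hb₂ hu12 hwx
  · exact c4aux hG ha₁ ha₃ hb₁ hb₃ hu13 hwx
  · exact c4aux hG ha₂ ha₃ hb₂ hb₃ hu23 hy
  · exact c4aux hG ha₂ ha₃ hb₂ hb₃ hu23 hwx
  · exact c4aux hG ha₁ ha₃ hb₁ hb₃ hu13 hy
  · exact c4aux hG ha₁ ha₂ hb₁ hb₂ hu12 hy
  · exact c4aux hG ha₁ ha₂ hb₁ hb₂ hu12 hy
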